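/- Bibasic generalization of Entry 1.4.5: Let q, h, t be complex numbers with |q^h| < 1, |q^t| < 1 and |q^{ht}| < 1 (principal complex powers), and let a be a complex number such that all denominators below are nonzero. Then ∑_{j=0}^∞ [(−aq;q^t)_j · (q^h;q^h)_{tj} / (q^t;q^t)_j] · (q^t)^j = [(−aq;q^t)_∞ (q^h;q^h)_∞ / (q^t;q^t)_∞] · ∑_{k=0}^∞ [(q^t;q^t)_{hk} / ((q^h;q^h)_k · (−aq;q^t)_{hk+1})] · (q^h)^k. -/

import Mathlib

open Complex

/-- Finite q-Pochhammer symbol `(A;Q)_k = ∏_{r=0}^{k-1} (1 - A Q^r)`. -/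
noncomputable def qp (A Q : ℂ) (k : ℕ) : ℂ := ∏ r ∈ Finset.range k, (1 - A * Q ^ r)

/-- Infinite q-Pochhammer symbol `(A;Q)_∞ = ∏_{r=0}^{∞} (1 - A Q^r)`. -/
noncomputable def qpInf (A Q : ℂ) : ℂ := ∏' r : ℕ, (1 - A * Q ^ r)

/-- q-Pochhammer symbol with (possibly non-integer) index:
`(A;Q)_{c k} := (A;Q)_∞ / (A R^k;Q)_∞` where `R = Q^c`. -/
noncomputable def qpc (A Q R : ℂ) (k : ℕ) : ℂ := qpInf A Q / qpInf (A * R ^ k) Q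

/-- q-Pochhammer symbol with shifted (possibly non-integer) index:
`(A;Q)_{c k + 1} := (A;Q)_∞ / (A Q R^k;Q)_∞` where `R = Q^c`. -/
noncomputable def qpc1 (A Q R : ℂ) (k : ℕ) : ℂ := qpInf A Q / qpInf (A * Q * R ^ k) Q

section Helpers
open Filter

lemma qp_succ (A Q : ℂ) (n : ℕ) : qp A Q (n + 1) = qp A Q n * (1 - A * Q ^ n) :=
  Finset.prod_range_succ _ _

lemma qp_tendsto (A Q : ℂ) (hQ : ‖Q‖ < 1) :
    Tendsto (fun n => qp A Q n) atTop (nhds (qpInf A Q)) := by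
  have hmult : Multipliable (fun r : ℕ => 1 - A * Q ^ r) := by
    by_cases hz : ∃ r, 1 - A * Q ^ r = 0
    · obtain ⟨r0, hr0⟩ := hz
      refine ⟨0, ?_⟩
      have hev : (fun s : Finset ℕ => ∏ i ∈ s, (1 - A * Q ^ i)) =ᶠ[atTop] (fun _ => 0) := by
        filter_upwards [Filter.eventually_ge_atTop ({r0} : Finset ℕ)] with s hs
        exact Finset.prod_eq_zero (hs (Finset.mem_singleton_self r0)) hr0
      rw [HasProd, SummationFilter.unconditional_filter, Filter.tendsto_congr' hev]
      exact tendsto_const_nhds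
    · push_neg at hz
      refine Complex.multipliable_of_summable_log ?_
      have hsum : Summable (fun r : ℕ => (3/2 : ℝ) * (‖A‖ * ‖Q‖ ^ r)) :=
        (((summable_geometric_of_lt_one (norm_nonneg Q) hQ).mul_left ‖A‖).mul_left _)
      refine hsum.of_norm_bounded_eventually_nat ?_
      have h0 : Tendsto (fun r : ℕ => ‖A‖ * ‖Q‖ ^ r) atTop (nhds 0) := by
        simpa using (tendsto_pow_atTop_nhds_zero_of_lt_one (norm_nonneg Q) hQ).const_mul ‖A‖
      have h0' : ∀ᶠ r in atTop, ‖A‖ * ‖Q‖ ^ r < 1/2 :=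
        h0.eventually_lt_const (by norm_num)
      filter_upwards [h0'] with r hr
      have hnorm : ‖-(A * Q ^ r)‖ ≤ 1/2 := by
        rw [norm_neg, norm_mul, norm_pow]; exact hr.le
      have := Complex.norm_log_one_add_half_le_self hnorm
      rw [show (1 : ℂ) + -(A * Q ^ r) = 1 - A * Q ^ r by ring] at this
      calc ‖Complex.log (1 - A * Q ^ r)‖ ≤ 3/2 * ‖-(A * Q ^ r)‖ := this
        _ = 3/2 * (‖A‖ * ‖Q‖ ^ r) := by rw [norm_neg, norm_mul, norm_pow]
  simpa [qp, qpInf] using hmult.hasProd.tendsto_prod_nat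

lemma qp_bdd (A Q : ℂ) (hQ : ‖Q‖ < 1) : ∃ M : ℝ, ∀ n, ‖qp A Q n‖ ≤ M := by
  obtain ⟨M, hM⟩ := ((qp_tendsto A Q hQ).norm).bddAbove_range
  exact ⟨M, fun n => hM (Set.mem_range_self n)⟩

lemma qp_inv_bdd (A Q : ℂ) (hQ : ‖Q‖ < 1) (h0 : qpInf A Q ≠ 0) :
    ∃ M : ℝ, ∀ n, ‖(qp A Q n)⁻¹‖ ≤ M := by
  obtain ⟨M, hM⟩ := (((qp_tendsto A Q hQ).inv₀ h0).norm).bddAbove_range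
  exact ⟨M, fun n => hM (Set.mem_range_self n)⟩

lemma cbound (A Q : ℂ) (hQ : ‖Q‖ < 1) (h0 : qpInf Q Q ≠ 0) :
    ∃ M : ℝ, 0 ≤ M ∧ ∀ n, ‖qp A Q n / qp Q Q n‖ ≤ M := by
  obtain ⟨M1, hM1⟩ := qp_bdd A Q hQ
  obtain ⟨M2, hM2⟩ := qp_inv_bdd Q Q hQ h0
  have hM1' : (0:ℝ) ≤ M1 := le_trans (norm_nonneg _) (hM1 0)
  have hM2' : (0:ℝ) ≤ M2 := le_trans (norm_nonneg _) (hM2 0)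
  refine ⟨M1 * M2, mul_nonneg hM1' hM2', fun n => ?_⟩
  rw [div_eq_mul_inv, norm_mul]
  exact mul_le_mul (hM1 n) (hM2 n) (norm_nonneg _) hM1'

lemma qbinom (A Q z : ℂ) (hQ : ‖Q‖ < 1) (hz : ‖z‖ < 1)
    (hd : ∀ n, qp Q Q n ≠ 0) (hdInf : qpInf Q Q ≠ 0) (hzInf : qpInf z Q ≠ 0) :
    ∑' n : ℕ, qp A Q n / qp Q Q n * z ^ n = qpInf (A * z) Q / qpInf z Q := by
  set c : ℕ → ℂ := fun n => qp A Q n / qp Q Q n with hc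
  obtain ⟨M, hM0, hM⟩ := cbound A Q hQ hdInf
  have hsummable : ∀ w : ℂ, ‖w‖ < 1 → Summable (fun n => c n * w ^ n) := by
    intro w hw
    refine Summable.of_norm_bounded
      ((summable_geometric_of_lt_one (norm_nonneg w) hw).mul_left M) (fun n => ?_)
    rw [norm_mul, norm_pow]
    exact mul_le_mul_of_nonneg_right (hM n) (pow_nonneg (norm_nonneg w) n)
  set F : ℂ → ℂ := fun w => ∑' n : ℕ, c n * w ^ n with hF
  -- recurrence
  have hrec : ∀ n : ℕ, c (n + 1) * (1 - Q ^ (n + 1)) = c n * (1 - A * Q ^ n) := by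
    intro n
    have e1 : qp Q Q (n+1) = qp Q Q n * (1 - Q * Q ^ n) := qp_succ Q Q n
    have e2 : qp A Q (n+1) = qp A Q n * (1 - A * Q ^ n) := qp_succ A Q n
    have h1 := hd n
    have h2 := hd (n+1)
    rw [e1] at h2
    have h3 : (1 - Q * Q ^ n) ≠ 0 := fun h => h2 (by rw [h, mul_zero])
    simp only [hc, e1, e2, pow_succ]
    have h3' : 1 - Q ^ n * Q ≠ 0 := by rwa [mul_comm]
    field_simp
  -- functional equation
  have feq : ∀ w : ℂ, ‖w‖ < 1 → (1 - w) * F w = (1 - A * w) * F (Q * w) := by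
    intro w hw
    have hw' : ‖Q * w‖ < 1 := by
      rw [norm_mul]
      nlinarith [norm_nonneg Q, norm_nonneg w]
    have s1 := hsummable w hw
    have s2 := hsummable (Q * w) hw'
    have s3 : Summable (fun n => c n * w ^ (n + 1)) := by
      have := s1.mul_left w
      refine this.congr (fun n => ?_)
      ring
    have s4 : Summable (fun n => A * c n * Q ^ n * w ^ (n + 1)) := by
      have := s2.mul_left (A * w)
      refine this.congr (fun n => ?_)
      rw [mul_pow]; ring
    have s2' : Summable (fun n => c n * Q ^ n * w ^ n) := by
      refine s2.congr (fun n => ?_)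
      rw [mul_pow]; ring
    -- middle identity
    have mid : ∑' n : ℕ, (c n * w ^ n - c n * Q ^ n * w ^ n)
        = ∑' n : ℕ, (c n * w ^ (n + 1) - A * c n * Q ^ n * w ^ (n + 1)) := by
      have sL : Summable (fun n => c n * w ^ n - c n * Q ^ n * w ^ n) := s1.sub s2'
      have hL0 : (fun n : ℕ => c n * w ^ n - c n * Q ^ n * w ^ n) 0 = 0 := by simp
      rw [sL.tsum_eq_zero_add]
      have hz0 : c 0 * w ^ 0 - c 0 * Q ^ 0 * w ^ 0 = 0 := by ring
      rw [hz0, zero_add]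
      refine tsum_congr (fun n => ?_)
      have := hrec n
      calc c (n+1) * w ^ (n+1) - c (n+1) * Q ^ (n+1) * w ^ (n+1)
          = (c (n+1) * (1 - Q ^ (n+1))) * w ^ (n+1) := by ring
        _ = (c n * (1 - A * Q ^ n)) * w ^ (n+1) := by rw [this]
        _ = c n * w ^ (n + 1) - A * c n * Q ^ n * w ^ (n + 1) := by ring
    have eL : ∑' n : ℕ, (c n * w ^ n - c n * Q ^ n * w ^ n)
        = F w - ∑' n : ℕ, c n * Q ^ n * w ^ n := s1.tsum_sub s2'
    have eR : ∑' n : ℕ, (c n * w ^ (n + 1) - A * c n * Q ^ n * w ^ (n + 1))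
        = (∑' n : ℕ, c n * w ^ (n+1)) - ∑' n : ℕ, A * c n * Q ^ n * w ^ (n + 1) :=
      s3.tsum_sub s4
    have e3 : ∑' n : ℕ, c n * w ^ (n+1) = w * F w := by
      rw [hF, ← tsum_mul_left]
      exact tsum_congr (fun n => by ring)
    have e4 : ∑' n : ℕ, A * c n * Q ^ n * w ^ (n + 1) = (A * w) * F (Q * w) := by
      rw [hF, ← tsum_mul_left]
      refine tsum_congr (fun n => ?_)
      rw [mul_pow]; ring
    have e5 : ∑' n : ℕ, c n * Q ^ n * w ^ n = F (Q * w) := by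
      rw [hF]
      refine tsum_congr (fun n => ?_)
      rw [mul_pow]; ring
    rw [eL, eR, e3, e4, e5] at mid
    linear_combination mid
  -- iteration
  have iter : ∀ k : ℕ, F z * qp z Q k = qp (A * z) Q k * F (Q ^ k * z) := by
    intro k
    induction k with
    | zero => simp [qp]
    | succ k ih =>
      have hwk : ‖Q ^ k * z‖ < 1 := by
        rw [norm_mul, norm_pow]
        calc ‖Q‖ ^ k * ‖z‖ ≤ 1 * ‖z‖ := by
              exact mul_le_mul_of_nonneg_right (pow_le_one₀ (norm_nonneg Q) hQ.le) (norm_nonneg z)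
          _ < 1 := by rwa [one_mul]
      have hfe := feq (Q ^ k * z) hwk
      have harg : Q * (Q ^ k * z) = Q ^ (k+1) * z := by rw [pow_succ]; ring
      rw [harg] at hfe
      rw [qp_succ, qp_succ]
      calc F z * (qp z Q k * (1 - z * Q ^ k))
          = (F z * qp z Q k) * (1 - z * Q ^ k) := by ring
        _ = (qp (A*z) Q k * F (Q ^ k * z)) * (1 - z * Q ^ k) := by rw [ih]
        _ = qp (A*z) Q k * ((1 - Q ^ k * z) * F (Q ^ k * z)) := by ring
        _ = qp (A*z) Q k * ((1 - A * (Q ^ k * z)) * F (Q ^ (k+1) * z)) := by rw [hfe]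
        _ = qp (A * z) Q k * (1 - A * z * Q ^ k) * F (Q ^ (k+1) * z) := by ring
  -- limit of F (Q^k z)
  have hFone : Tendsto (fun k : ℕ => F (Q ^ k * z)) atTop (nhds 1) := by
    rw [tendsto_iff_norm_sub_tendsto_zero]
    have hbound : ∀ k : ℕ, ‖F (Q ^ k * z) - 1‖ ≤ (M * (1 - ‖z‖)⁻¹ * ‖z‖) * ‖Q‖ ^ k := by
      intro k
      have hwk : ‖Q ^ k * z‖ < 1 := by
        rw [norm_mul, norm_pow]
        calc ‖Q‖ ^ k * ‖z‖ ≤ 1 * ‖z‖ :=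
              mul_le_mul_of_nonneg_right (pow_le_one₀ (norm_nonneg Q) hQ.le) (norm_nonneg z)
          _ < 1 := by rwa [one_mul]
      set w := Q ^ k * z with hwdef
      have hsw := hsummable w hwk
      have hzero : F w = c 0 * w ^ 0 + ∑' n : ℕ, c (n+1) * w ^ (n+1) := by
        rw [hF]
        exact hsw.tsum_eq_zero_add
      have hc0 : c 0 * w ^ 0 = 1 := by simp [hc, qp]
      have hFsub : F w - 1 = ∑' n : ℕ, c (n+1) * w ^ (n+1) := by
        rw [hzero, hc0]; ring
      rw [hFsub]
      have hwnorm : ‖w‖ = ‖Q‖ ^ k * ‖z‖ := by rw [hwdef, norm_mul, norm_pow]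
      have hwle : ‖w‖ ≤ ‖z‖ := by
        rw [hwnorm]
        calc ‖Q‖ ^ k * ‖z‖ ≤ 1 * ‖z‖ :=
              mul_le_mul_of_nonneg_right (pow_le_one₀ (norm_nonneg Q) hQ.le) (norm_nonneg z)
          _ = ‖z‖ := one_mul _
      have hsg : Summable (fun n : ℕ => M * ‖w‖ * ‖z‖ ^ n) :=
        ((summable_geometric_of_lt_one (norm_nonneg z) hz).mul_left (M * ‖w‖))
      have hsn : Summable (fun n : ℕ => ‖c (n+1) * w ^ (n+1)‖) := by
        refine Summable.of_nonneg_of_le (fun n => norm_nonneg _) (fun n => ?_) hsg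
        rw [norm_mul, norm_pow, pow_succ']
        calc ‖c (n+1)‖ * (‖w‖ * ‖w‖ ^ n) ≤ M * (‖w‖ * ‖w‖ ^ n) :=
              mul_le_mul_of_nonneg_right (hM (n+1))
                (mul_nonneg (norm_nonneg w) (pow_nonneg (norm_nonneg w) n))
          _ ≤ M * (‖w‖ * ‖z‖ ^ n) := by
              refine mul_le_mul_of_nonneg_left ?_ hM0
              exact mul_le_mul_of_nonneg_left
                (pow_le_pow_left₀ (norm_nonneg w) hwle n) (norm_nonneg w)
          _ = M * ‖w‖ * ‖z‖ ^ n := by ring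
      calc ‖∑' n : ℕ, c (n+1) * w ^ (n+1)‖ ≤ ∑' n : ℕ, ‖c (n+1) * w ^ (n+1)‖ :=
            norm_tsum_le_tsum_norm hsn
        _ ≤ ∑' n : ℕ, M * ‖w‖ * ‖z‖ ^ n := by
            refine Summable.tsum_le_tsum (fun n => ?_) hsn hsg
            rw [norm_mul, norm_pow, pow_succ']
            calc ‖c (n+1)‖ * (‖w‖ * ‖w‖ ^ n) ≤ M * (‖w‖ * ‖w‖ ^ n) :=
                  mul_le_mul_of_nonneg_right (hM (n+1))
                    (mul_nonneg (norm_nonneg w) (pow_nonneg (norm_nonneg w) n))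
              _ ≤ M * (‖w‖ * ‖z‖ ^ n) := by
                  refine mul_le_mul_of_nonneg_left ?_ hM0
                  exact mul_le_mul_of_nonneg_left
                    (pow_le_pow_left₀ (norm_nonneg w) hwle n) (norm_nonneg w)
              _ = M * ‖w‖ * ‖z‖ ^ n := by ring
        _ = M * ‖w‖ * (1 - ‖z‖)⁻¹ := by
            rw [tsum_mul_left, tsum_geometric_of_lt_one (norm_nonneg z) hz]
        _ ≤ (M * (1 - ‖z‖)⁻¹ * ‖z‖) * ‖Q‖ ^ k := by
            rw [hwnorm]
            have h1z : (0:ℝ) < (1 - ‖z‖)⁻¹ := by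
              refine inv_pos.mpr ?_; linarith
            nlinarith [pow_nonneg (norm_nonneg Q) k, norm_nonneg z, hM0]
    refine squeeze_zero (fun k => norm_nonneg _) hbound ?_
    simpa using (tendsto_pow_atTop_nhds_zero_of_lt_one (norm_nonneg Q) hQ).const_mul
      (M * (1 - ‖z‖)⁻¹ * ‖z‖)
  -- take limits
  have t1 : Tendsto (fun k : ℕ => F z * qp z Q k) atTop (nhds (F z * qpInf z Q)) :=
    (qp_tendsto z Q hQ).const_mul _
  have t2 : Tendsto (fun k : ℕ => qp (A*z) Q k * F (Q ^ k * z)) atTop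
      (nhds (qpInf (A*z) Q * 1)) :=
    (qp_tendsto (A*z) Q hQ).mul hFone
  have t1' : Tendsto (fun k : ℕ => F z * qp z Q k) atTop (nhds (qpInf (A*z) Q * 1)) := by
    refine Tendsto.congr (fun k => (iter k).symm) t2
  have key : F z * qpInf z Q = qpInf (A*z) Q := by
    have := tendsto_nhds_unique t1 t1'
    rwa [mul_one] at this
  rw [hF] at key
  rw [← key, mul_div_assoc, div_self hzInf, mul_one]

lemma euler_sum (H z : ℂ) (hH : ‖H‖ < 1) (hz : ‖z‖ < 1)
    (hd : ∀ n, qp H H n ≠ 0) (hdInf : qpInf H H ≠ 0) (hzInf : qpInf z H ≠ 0) :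
    ∑' n : ℕ, z ^ n / qp H H n = 1 / qpInf z H := by
  have h := qbinom 0 H z hH hz hd hdInf hzInf
  have e1 : ∀ n : ℕ, qp (0:ℂ) H n = 1 := by
    intro n; simp [qp]
  have e2 : qpInf ((0:ℂ) * z) H = 1 := by
    simp [qpInf]
  rw [e2] at h
  rw [← h]
  refine tsum_congr (fun n => ?_)
  rw [e1]
  ring


end Helpers

set_option maxHeartbeats 2000000 in
/-- bibasic generalization of Entry 1.4.5. -/
theorem entry_1_4_5_bibasic (q h t a : ℂ)
    (hqh : ‖q ^ h‖ < 1) (hqt : ‖q ^ t‖ < 1)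
    (hqht : ‖q ^ (h * t)‖ < 1)
    (h1 : ∀ j : ℕ, qp (q ^ t) (q ^ t) j ≠ 0)
    (h2 : ∀ j : ℕ, qpInf (q ^ h * (q ^ (h * t)) ^ j) (q ^ h) ≠ 0)
    (h3 : qpInf (q ^ t) (q ^ t) ≠ 0)
    (h4 : ∀ k : ℕ, qp (q ^ h) (q ^ h) k ≠ 0)
    (h5 : ∀ k : ℕ, qpc1 (-a * q) (q ^ t) (q ^ (h * t)) k ≠ 0)
    (h6 : ∀ k : ℕ, qpInf (q ^ t * (q ^ (h * t)) ^ k) (q ^ t) ≠ 0)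
    (h7 : ∀ k : ℕ, qpInf (-a * q * q ^ t * (q ^ (h * t)) ^ k) (q ^ t) ≠ 0) :
    ∑' j : ℕ, (qp (-a * q) (q ^ t) j * qpc (q ^ h) (q ^ h) (q ^ (h * t)) j /
        qp (q ^ t) (q ^ t) j) * (q ^ t) ^ j
    = (qpInf (-a * q) (q ^ t) * qpInf (q ^ h) (q ^ h) / qpInf (q ^ t) (q ^ t)) *
      ∑' k : ℕ, (qpc (q ^ t) (q ^ t) (q ^ (h * t)) k /
        (qp (q ^ h) (q ^ h) k * qpc1 (-a * q) (q ^ t) (q ^ (h * t)) k)) * (q ^ h) ^ k := by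
  set A := -a * q with hAd
  set Q := q ^ t with hQd
  set H := q ^ h with hHd
  set R := q ^ (h * t) with hRd
  have hHinf : qpInf H H ≠ 0 := by simpa using h2 0
  have hAinf : qpInf A Q ≠ 0 := by
    have h50 := h5 0
    rw [qpc1] at h50
    exact fun hz => h50 (by rw [hz, zero_div])
  have hRk1 : ∀ m : ℕ, ‖R ^ m‖ ≤ 1 := fun m => by
    rw [norm_pow]; exact pow_le_one₀ (norm_nonneg R) hqht.le
  have hQR : ∀ k : ℕ, ‖Q * R ^ k‖ < 1 := fun k => by
    rw [norm_mul]
    calc ‖Q‖ * ‖R ^ k‖ ≤ ‖Q‖ * 1 := mul_le_mul_of_nonneg_left (hRk1 k) (norm_nonneg Q)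
      _ < 1 := by rwa [mul_one]
  have hHR : ∀ j : ℕ, ‖H * R ^ j‖ < 1 := fun j => by
    rw [norm_mul]
    calc ‖H‖ * ‖R ^ j‖ ≤ ‖H‖ * 1 := mul_le_mul_of_nonneg_left (hRk1 j) (norm_nonneg H)
      _ < 1 := by rwa [mul_one]
  set G : ℕ → ℕ → ℂ := fun j k =>
    (qp A Q j / qp Q Q j * Q ^ j) * (qpInf H H / qp H H k * H ^ k) * R ^ (j * k) with hG
  -- Step 1
  have hstep1 : ∀ j : ℕ, (qp A Q j * qpc H H R j / qp Q Q j) * Q ^ j = ∑' k : ℕ, G j k := by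
    intro j
    have he := euler_sum H (H * R ^ j) hqh (hHR j) h4 hHinf (h2 j)
    rw [qpc]
    have e0 : qp A Q j * (qpInf H H / qpInf (H * R ^ j) H) / qp Q Q j * Q ^ j
        = (qp A Q j / qp Q Q j * Q ^ j * qpInf H H) * (1 / qpInf (H * R ^ j) H) := by ring
    rw [e0, ← he, ← tsum_mul_left]
    refine tsum_congr (fun k => ?_)
    rw [hG, mul_pow, ← pow_mul]
    ring
  -- Summability of G over ℕ × ℕ
  obtain ⟨M1, hM10, hM1⟩ := cbound A Q hqt h3
  obtain ⟨M2', hM2'⟩ := qp_inv_bdd H H hqh hHinf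
  set M2 : ℝ := ‖qpInf H H‖ * M2' with hM2d
  have hM20 : 0 ≤ M2 :=
    mul_nonneg (norm_nonneg _) (le_trans (norm_nonneg _) (hM2' 0))
  have hGsum : Summable (Function.uncurry G) := by
    refine Summable.of_norm_bounded
      (g := fun p : ℕ × ℕ => (M1 * ‖Q‖ ^ p.1) * (M2 * ‖H‖ ^ p.2)) ?_ ?_
    · exact ((summable_geometric_of_lt_one (norm_nonneg Q) hqt).mul_left M1).mul_of_nonneg
        (((summable_geometric_of_lt_one (norm_nonneg H) hqh)).mul_left M2)
        (fun j => mul_nonneg hM10 (pow_nonneg (norm_nonneg Q) j))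
        (fun k => mul_nonneg hM20 (pow_nonneg (norm_nonneg H) k))
    · rintro ⟨j, k⟩
      have b1 : ‖qp A Q j / qp Q Q j * Q ^ j‖ ≤ M1 * ‖Q‖ ^ j := by
        rw [norm_mul, norm_pow]
        exact mul_le_mul_of_nonneg_right (hM1 j) (pow_nonneg (norm_nonneg Q) j)
      have b2 : ‖qpInf H H / qp H H k * H ^ k‖ ≤ M2 * ‖H‖ ^ k := by
        rw [norm_mul, norm_pow, div_eq_mul_inv, norm_mul]
        exact mul_le_mul_of_nonneg_right
          (mul_le_mul_of_nonneg_left (hM2' k) (norm_nonneg _))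
          (pow_nonneg (norm_nonneg H) k)
      have b3 : ‖R ^ (j * k)‖ ≤ 1 := hRk1 (j * k)
      calc ‖Function.uncurry G (j, k)‖
          = ‖qp A Q j / qp Q Q j * Q ^ j‖ * ‖qpInf H H / qp H H k * H ^ k‖ *
              ‖R ^ (j * k)‖ := by
            simp only [Function.uncurry, hG, norm_mul]
        _ ≤ (M1 * ‖Q‖ ^ j) * (M2 * ‖H‖ ^ k) * 1 := by
            refine mul_le_mul (mul_le_mul b1 b2 (norm_nonneg _) ?_) b3 (norm_nonneg _) ?_
            · exact mul_nonneg hM10 (pow_nonneg (norm_nonneg Q) j)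
            · exact mul_nonneg (mul_nonneg hM10 (pow_nonneg (norm_nonneg Q) j))
                (mul_nonneg hM20 (pow_nonneg (norm_nonneg H) k))
        _ = (M1 * ‖Q‖ ^ j) * (M2 * ‖H‖ ^ k) := mul_one _
  -- swap
  have hswap : ∑' j : ℕ, ∑' k : ℕ, G j k = ∑' k : ℕ, ∑' j : ℕ, G j k :=
    (hGsum.tsum_comm).symm
  -- Step D
  have hstepD : ∀ k : ℕ, ∑' j : ℕ, G j k
      = (qpInf H H / qp H H k * H ^ k) *
        (qpInf (A * (Q * R ^ k)) Q / qpInf (Q * R ^ k) Q) := by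
    intro k
    have hb := qbinom A Q (Q * R ^ k) hqt (hQR k) h1 h3 (h6 k)
    rw [← hb, ← tsum_mul_left]
    refine tsum_congr (fun j => ?_)
    rw [hG, mul_pow, ← pow_mul, mul_comm k j]
    ring
  -- Step E : RHS
  have hRHS : (qpInf A Q * qpInf H H / qpInf Q Q) *
      ∑' k : ℕ, (qpc Q Q R k / (qp H H k * qpc1 A Q R k)) * H ^ k
      = ∑' k : ℕ, ∑' j : ℕ, G j k := by
    rw [← tsum_mul_left]
    refine tsum_congr (fun k => ?_)
    rw [hstepD k, qpc, qpc1]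
    have e : A * (Q * R ^ k) = A * Q * R ^ k := (mul_assoc _ _ _).symm
    rw [e]
    field_simp [h3, h4 k, hAinf, h7 k, h6 k]
  calc ∑' j : ℕ, (qp A Q j * qpc H H R j / qp Q Q j) * Q ^ j
      = ∑' j : ℕ, ∑' k : ℕ, G j k := tsum_congr hstep1
    _ = ∑' k : ℕ, ∑' j : ℕ, G j k := hswap
    _ = (qpInf A Q * qpInf H H / qpInf Q Q) *
        ∑' k : ℕ, (qpc Q Q R k / (qp H H k * qpc1 A Q R k)) * H ^ k := hRHS.symm
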